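/- For every natural number n, there are, up to isomorphism, only finitely many virtually cyclic groups A all of whose finite subgroups have order at most n. -/

import Mathlib

/-- A group is virtually cyclic if it has a cyclic subgroup of finite index. -/
def IsVirtuallyCyclic (G : Type*) [Group G] : Prop :=
  ∃ H : Subgroup G, IsCyclic H ∧ H.FiniteIndex

universe u

namespace VCC
set_option synthInstance.maxSize 2000
set_option synthInstance.maxHeartbeats 2000000
set_option maxHeartbeats 2000000
open scoped commutatorElement

structure FinDat (M : ℕ) where
  m : Fin (M + 1)
  hm0 : 0 < (m : ℕ)
  mul : Fin m → Fin m → Fin m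
  one : Fin m
  inv : Fin m → Fin m
  deriving Fintype

structure ExtDat (M : ℕ) where
  m : Fin (M + 1)
  hm0 : 0 < (m : ℕ)
  mul : Fin m → Fin m → Fin m
  one : Fin m
  inv : Fin m → Fin m
  eps : Fin m → Bool
  c : Fin m → Fin m → Fin 3
  deriving Fintype

variable {M : ℕ}

def FinDat.IsGp (d : FinDat M) : Prop :=
  (∀ a b c, d.mul (d.mul a b) c = d.mul a (d.mul b c)) ∧ (∀ a, d.mul d.one a = a) ∧
    (∀ a, d.mul (d.inv a) a = d.one)

def FinDat.grp (d : FinDat M) (h : d.IsGp) : Group (Fin d.m) :=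
  letI : Mul (Fin d.m) := ⟨d.mul⟩
  letI : One (Fin d.m) := ⟨d.one⟩
  letI : Inv (Fin d.m) := ⟨d.inv⟩
  Group.ofLeftAxioms h.1 h.2.1 h.2.2

/-- sign action -/
def ExtDat.ap (d : ExtDat M) (x : Fin d.m) (b : ℤ) : ℤ := if d.eps x then -b else b

def ExtDat.cInt (d : ExtDat M) (x y : Fin d.m) : ℤ := (d.c x y : ℤ) - 1

def ExtDat.mul' (d : ExtDat M) (p q : ℤ × Fin d.m) : ℤ × Fin d.m :=
  (p.1 + d.ap p.2 q.1 + d.cInt p.2 q.2, d.mul p.2 q.2)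

def ExtDat.one' (d : ExtDat M) : ℤ × Fin d.m := (0, d.one)

def ExtDat.inv' (d : ExtDat M) (p : ℤ × Fin d.m) : ℤ × Fin d.m :=
  (-(d.ap (d.inv p.2) p.1) - d.cInt (d.inv p.2) p.2, d.inv p.2)

def ExtDat.IsGp (d : ExtDat M) : Prop :=
  (∀ a b c, d.mul' (d.mul' a b) c = d.mul' a (d.mul' b c)) ∧ (∀ a, d.mul' d.one' a = a) ∧
    (∀ a, d.mul' (d.inv' a) a = d.one')

def ExtDat.grp (d : ExtDat M) (h : d.IsGp) : Group (ℤ × Fin d.m) :=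
  letI : Mul (ℤ × Fin d.m) := ⟨d.mul'⟩
  letI : One (ℤ × Fin d.m) := ⟨d.one'⟩
  letI : Inv (ℤ × Fin d.m) := ⟨d.inv'⟩
  Group.ofLeftAxioms h.1 h.2.1 h.2.2

theorem pullbackAxioms {G X : Type*} [Group G] (e : X ≃ G) (mul : X → X → X) (one : X)
    (inv : X → X) (hmul : ∀ x y, e (mul x y) = e x * e y) (hone : e one = 1)
    (hinv : ∀ x, e (inv x) = (e x)⁻¹) :
    (∀ a b c, mul (mul a b) c = mul a (mul b c)) ∧ (∀ a, mul one a = a) ∧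
      (∀ a, mul (inv a) a = one) := by
  refine ⟨fun a b c => e.injective ?_, fun a => e.injective ?_, fun a => e.injective ?_⟩ <;>
    simp [hmul, hone, hinv, mul_assoc]

/-- pulled-back mul-equiv -/
def pullbackEquiv {G X : Type*} [Group G] (e : X ≃ G) (mul : X → X → X)
    (hmul : ∀ x y, e (mul x y) = e x * e y) : @MulEquiv G X ⟨(· * ·)⟩ ⟨mul⟩ :=
  letI : Mul X := ⟨mul⟩
  { e.symm with map_mul' := fun a b => e.injective (by
      show e (e.symm (a * b)) = e (mul (e.symm a) (e.symm b))
      rw [hmul]; simp) }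

theorem finite_case {A : Type u} [Group A] [Finite A] (hM : Nat.card A ≤ M) :
    ∃ d : FinDat M, ∃ _ : d.IsGp, Nonempty (@MulEquiv A (Fin d.m) ⟨(· * ·)⟩ ⟨d.mul⟩) := by
  have : Nonempty A := ⟨1⟩
  haveI := Fintype.ofFinite A
  have hm : Fintype.card A ≤ M := by rwa [Nat.card_eq_fintype_card] at hM
  let f : Fin (Fintype.card A) ≃ A := (Fintype.equivFin A).symm
  refine ⟨⟨⟨Fintype.card A, by omega⟩, Fintype.card_pos,
    fun x y => f.symm (f x * f y), f.symm 1, fun x => f.symm (f x)⁻¹⟩, ?_, ?_⟩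
  · exact pullbackAxioms f _ _ _ (fun x y => by simp) (by simp) (fun x => by simp)
  · exact ⟨pullbackEquiv f _ (fun x y => by simp)⟩

theorem ext_case {A : Type u} [Group A] (t : A) (ht : ¬IsOfFinOrder t)
    (hn : (Subgroup.zpowers t).Normal) (h0 : (Subgroup.zpowers t).index ≠ 0)
    (hM : (Subgroup.zpowers t).index ≤ M) :
    ∃ d : ExtDat M, ∃ _ : d.IsGp, Nonempty (@MulEquiv A (ℤ × Fin d.m) ⟨(· * ·)⟩ ⟨d.mul'⟩) := by
  classical
  haveI := hn
  haveI : (Subgroup.zpowers t).FiniteIndex := ⟨h0⟩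
  have tinj : Function.Injective fun n : ℤ => t ^ n :=
    injective_zpow_iff_not_isOfFinOrder.mpr ht
  have hconjmem : ∀ x : A, x * t * x⁻¹ ∈ Subgroup.zpowers t := fun x =>
    hn.conj_mem _ (Subgroup.mem_zpowers t) x
  choose E hE using fun x : A => Subgroup.mem_zpowers_iff.mp (hconjmem x)
  have hconj : ∀ (g : A) (a : ℤ), g * t ^ a * g⁻¹ = t ^ (E g * a) := by
    intro g a
    rw [zpow_mul t (E g) a, hE g]
    exact conj_zpow.symm
  have hswap : ∀ (g : A) (a : ℤ), g * t ^ a = t ^ (E g * a) * g := by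
    intro g a
    rw [← hconj g a, inv_mul_cancel_right]
  have hE1 : E 1 = 1 := by
    apply tinj
    show t ^ E 1 = t ^ (1 : ℤ)
    rw [hE, zpow_one, one_mul, inv_one, mul_one]
  have hEmul : ∀ x y : A, E (x * y) = E x * E y := by
    intro x y
    apply tinj
    show t ^ E (x * y) = t ^ (E x * E y)
    calc t ^ E (x * y) = (x * y) * t * (x * y)⁻¹ := hE _
      _ = x * (y * t * y⁻¹) * x⁻¹ := by group
      _ = x * t ^ E y * x⁻¹ := by rw [hE]
      _ = (x * t * x⁻¹) ^ E y := conj_zpow.symm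
      _ = (t ^ E x) ^ E y := by rw [hE]
      _ = t ^ (E x * E y) := (zpow_mul t (E x) (E y)).symm
  have hEunit : ∀ x : A, E x = 1 ∨ E x = -1 := by
    intro x
    refine Int.isUnit_iff.mp (IsUnit.of_mul_eq_one (a := E x) (E x⁻¹) ?_)
    rw [← hEmul, mul_inv_cancel, hE1]
  have hEt : ∀ (a : ℤ) (x : A), E (t ^ a * x) = E x := by
    intro a x
    apply tinj
    show t ^ E (t ^ a * x) = t ^ E x
    calc t ^ E (t ^ a * x) = (t ^ a * x) * t * (t ^ a * x)⁻¹ := hE _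
      _ = t ^ a * (x * t * x⁻¹) * (t ^ a)⁻¹ := by group
      _ = t ^ a * t ^ E x * (t ^ a)⁻¹ := by rw [hE]
      _ = t ^ a * t ^ E x * t ^ (-a) := by rw [← zpow_neg]
      _ = t ^ (a + E x + -a) := by rw [zpow_add, zpow_add]
      _ = t ^ E x := by congr 1; ring
  set Z := Subgroup.zpowers t with hZdef
  haveI : Finite (A ⧸ Z) := Subgroup.finite_quotient_of_finiteIndex (H := Z)
  haveI : Fintype (A ⧸ Z) := Fintype.ofFinite _
  set m := Z.index with hmdef
  have hmQ : Fintype.card (A ⧸ Z) = m := by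
    rw [← Nat.card_eq_fintype_card]; rfl
  set σ : A ⧸ Z → A := fun q => if q = 1 then 1 else q.out with hσdef
  have hσ : ∀ q : A ⧸ Z, (QuotientGroup.mk (σ q) : A ⧸ Z) = q := by
    intro q
    by_cases h : q = 1
    · simp [hσdef, h]
    · simp only [hσdef, if_neg h]
      exact Quotient.out_eq' q
  have hσ1 : σ 1 = 1 := if_pos rfl
  have hmem : ∀ x y : A ⧸ Z, σ x * σ y * (σ (x * y))⁻¹ ∈ Z := by
    intro x y
    rw [← QuotientGroup.eq_one_iff]
    simp only [QuotientGroup.mk_mul, QuotientGroup.mk_inv, hσ]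
    group
  choose c hc using fun x y => Subgroup.mem_zpowers_iff.mp (hmem x y)
  have hc' : ∀ x y : A ⧸ Z, σ x * σ y = t ^ c x y * σ (x * y) := by
    intro x y
    rw [hc, inv_mul_cancel_right]
  have hcoc : ∀ x y z : A ⧸ Z, c x y + c (x * y) z = E (σ x) * c y z + c x (y * z) := by
    intro x y z
    apply tinj
    show t ^ (c x y + c (x * y) z) = t ^ (E (σ x) * c y z + c x (y * z))
    have key : t ^ (c x y + c (x * y) z) * σ (x * y * z) =
        t ^ (E (σ x) * c y z + c x (y * z)) * σ (x * (y * z)) := by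
      calc t ^ (c x y + c (x * y) z) * σ (x * y * z)
          = t ^ c x y * (t ^ c (x * y) z * σ (x * y * z)) := by
            rw [zpow_add, mul_assoc]
        _ = t ^ c x y * (σ (x * y) * σ z) := by rw [hc']
        _ = t ^ c x y * σ (x * y) * σ z := by rw [mul_assoc]
        _ = σ x * σ y * σ z := by rw [← hc']
        _ = σ x * (σ y * σ z) := by rw [mul_assoc]
        _ = σ x * (t ^ c y z * σ (y * z)) := by rw [hc']
        _ = σ x * t ^ c y z * σ (y * z) := by rw [mul_assoc]
        _ = t ^ (E (σ x) * c y z) * σ x * σ (y * z) := by rw [hswap]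
        _ = t ^ (E (σ x) * c y z) * (σ x * σ (y * z)) := by rw [mul_assoc]
        _ = t ^ (E (σ x) * c y z) * (t ^ c x (y * z) * σ (x * (y * z))) := by rw [hc']
        _ = t ^ (E (σ x) * c y z + c x (y * z)) * σ (x * (y * z)) := by
            rw [zpow_add, mul_assoc]
    rw [mul_assoc x y z] at key
    exact mul_right_cancel key
  have hc1 : ∀ y, c 1 y = 0 := by
    intro y
    apply tinj
    show t ^ c 1 y = t ^ (0 : ℤ)
    rw [hc, hσ1, one_mul, one_mul y, zpow_zero, mul_inv_cancel]
  set B : A ⧸ Z → ℤ := fun q => ∑ z : A ⧸ Z, c q z with hBdef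
  have hmc : ∀ x y : A ⧸ Z, (m : ℤ) * c x y = E (σ x) * B y - B (x * y) + B x := by
    intro x y
    have hsum : ∑ z : A ⧸ Z, (c x y + c (x * y) z) =
        ∑ z : A ⧸ Z, (E (σ x) * c y z + c x (y * z)) :=
      Finset.sum_congr rfl fun z _ => hcoc x y z
    rw [Finset.sum_add_distrib, Finset.sum_add_distrib, Finset.sum_const, ← Finset.mul_sum]
      at hsum
    have hre : ∑ z : A ⧸ Z, c x (y * z) = B x :=
      Fintype.sum_equiv (Equiv.mulLeft y) _ _ (fun z => rfl)
    rw [hre] at hsum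
    have hcard : (Finset.univ : Finset (A ⧸ Z)).card = m := by
      rw [Finset.card_univ, hmQ]
    rw [hcard] at hsum
    have h2 : (m : ℤ) * c x y + B (x * y) = E (σ x) * B y + B x := by
      simpa [nsmul_eq_mul, hBdef] using hsum
    linarith
  set qh : A ⧸ Z → ℤ := fun x => B x / (m : ℤ) with hqdef
  set r : A ⧸ Z → ℤ := fun x => B x % (m : ℤ) with hrdef
  have hm0' : (0 : ℤ) < (m : ℤ) := by exact_mod_cast Nat.pos_of_ne_zero h0
  have hBeq : ∀ x, B x = (m : ℤ) * qh x + r x := fun x => (Int.mul_ediv_add_emod (B x) m).symm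
  have hrb : ∀ x, 0 ≤ r x ∧ r x < m := fun x =>
    ⟨Int.emod_nonneg _ (by exact_mod_cast h0), Int.emod_lt_of_pos _ hm0'⟩
  set c' : A ⧸ Z → A ⧸ Z → ℤ :=
    fun x y => c x y - (qh x + E (σ x) * qh y - qh (x * y)) with hc'def
  have hmc' : ∀ x y, (m : ℤ) * c' x y = E (σ x) * r y + r x - r (x * y) := by
    intro x y
    have h1 := hmc x y
    have e1 := hBeq x
    have e2 := hBeq y
    have e3 := hBeq (x * y)
    simp only [hc'def]
    rcases hEunit (σ x) with he | he <;> rw [he] at h1 ⊢ <;>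
      [linear_combination h1 + e1 + e2 - e3; linear_combination h1 + e1 - e2 - e3]
  have hrange : ∀ x y, c' x y = -1 ∨ c' x y = 0 ∨ c' x y = 1 := by
    intro x y
    have h := hmc' x y
    have h1 := hrb x
    have h2 := hrb y
    have h3 := hrb (x * y)
    have hlow : (m : ℤ) * (-2) < (m : ℤ) * c' x y := by
      rcases hEunit (σ x) with he | he <;> rw [he] at h <;> linarith
    have hhigh : (m : ℤ) * c' x y < (m : ℤ) * 2 := by
      rcases hEunit (σ x) with he | he <;> rw [he] at h <;> linarith
    have l1 : (-2 : ℤ) < c' x y := lt_of_mul_lt_mul_left hlow (le_of_lt hm0')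
    have l2 : c' x y < 2 := lt_of_mul_lt_mul_left hhigh (le_of_lt hm0')
    omega
  have hB1 : B 1 = 0 := by
    simp only [hBdef]
    rw [Finset.sum_congr rfl fun z _ => hc1 z, Finset.sum_const, smul_zero]
  have hq1 : qh 1 = 0 := by
    simp only [hqdef, hB1]
    exact Int.zero_ediv _
  set σ' : A ⧸ Z → A := fun x => t ^ (-qh x) * σ x with hσ'def
  have hσ'1 : σ' 1 = 1 := by
    simp only [hσ'def, hq1, hσ1, neg_zero, zpow_zero, one_mul]
  have hEσ' : ∀ x, E (σ' x) = E (σ x) := fun x => hEt _ _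
  have hc'' : ∀ x y, σ' x * σ' y = t ^ c' x y * σ' (x * y) := by
    intro x y
    calc σ' x * σ' y = t ^ (-qh x) * (σ x * t ^ (-qh y)) * σ y := by
          simp only [hσ'def]; group
      _ = t ^ (-qh x) * (t ^ (E (σ x) * -qh y) * σ x) * σ y := by rw [hswap]
      _ = t ^ (-qh x) * t ^ (E (σ x) * -qh y) * (σ x * σ y) := by group
      _ = t ^ (-qh x) * t ^ (E (σ x) * -qh y) * (t ^ c x y * σ (x * y)) := by rw [hc']
      _ = t ^ (-qh x + E (σ x) * -qh y + c x y + qh (x * y)) *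
            (t ^ (-qh (x * y)) * σ (x * y)) := by
          rw [zpow_add, zpow_add, zpow_add]; group
      _ = t ^ c' x y * σ' (x * y) := by
          simp only [hσ'def, hc'def]
          congr 1
          congr 1
          ring
  have hσ'mk : ∀ x, (QuotientGroup.mk (σ' x) : A ⧸ Z) = x := by
    intro x
    simp only [hσ'def, QuotientGroup.mk_mul]
    rw [(QuotientGroup.eq_one_iff _).mpr (Subgroup.zpow_mem _ (Subgroup.mem_zpowers t) _),
      one_mul, hσ]
  have hmk : ∀ (a : ℤ) (x : A ⧸ Z), (QuotientGroup.mk (t ^ a * σ' x) : A ⧸ Z) = x := by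
    intro a x
    rw [QuotientGroup.mk_mul,
      (QuotientGroup.eq_one_iff _).mpr (Subgroup.zpow_mem _ (Subgroup.mem_zpowers t) _),
      one_mul, hσ'mk]
  have hbij : Function.Bijective (fun p : ℤ × (A ⧸ Z) => t ^ p.1 * σ' p.2) := by
    constructor
    · rintro ⟨a, x⟩ ⟨b, y⟩ hxy
      simp only at hxy
      have hq : x = y := by
        rw [← hmk a x, ← hmk b y, hxy]
      subst hq
      have h2 : t ^ a = t ^ b := mul_right_cancel hxy
      have h3 := tinj h2
      rw [h3]
    · intro g
      have hker : g * (σ' (QuotientGroup.mk g))⁻¹ ∈ Z := by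
        rw [← QuotientGroup.eq_one_iff]
        rw [QuotientGroup.mk_mul, QuotientGroup.mk_inv, hσ'mk]
        simp
      obtain ⟨a, ha⟩ := Subgroup.mem_zpowers_iff.mp hker
      exact ⟨⟨a, QuotientGroup.mk g⟩, by simp only; rw [ha, inv_mul_cancel_right]⟩
  set eQ : A ⧸ Z ≃ Fin m := Fintype.equivFinOfCardEq hmQ with heQdef
  have hc'nonneg : ∀ x y, 0 ≤ c' x y + 1 := by
    intro x y
    rcases hrange x y with h | h | h <;> omega
  have hc'lt : ∀ x y, (c' x y + 1).toNat < 3 := by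
    intro x y
    rcases hrange x y with h | h | h <;> simp [h]
  set d : ExtDat M := ⟨⟨m, by omega⟩, Nat.pos_of_ne_zero h0,
    fun i j => eQ (eQ.symm i * eQ.symm j), eQ 1, fun i => eQ (eQ.symm i)⁻¹,
    fun i => decide (E (σ (eQ.symm i)) = -1),
    fun i j => ⟨(c' (eQ.symm i) (eQ.symm j) + 1).toNat, hc'lt _ _⟩⟩ with hddef
  have hap : ∀ (i : Fin m) (b : ℤ), d.ap i b = E (σ (eQ.symm i)) * b := by
    intro i b
    rcases hEunit (σ (eQ.symm i)) with h | h <;>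
      simp [ExtDat.ap, show d.eps i = decide (E (σ (eQ.symm i)) = -1) from rfl, h]
  have hcInt : ∀ i j : Fin m, d.cInt i j = c' (eQ.symm i) (eQ.symm j) := by
    intro i j
    simp only [ExtDat.cInt, hddef]
    rw [Int.toNat_of_nonneg (hc'nonneg _ _)]
    ring
  set Ψ : ℤ × Fin m ≃ A :=
    (Equiv.prodCongr (Equiv.refl ℤ) eQ.symm).trans (Equiv.ofBijective _ hbij) with hΨdef
  have hΨap : ∀ p : ℤ × Fin m, Ψ p = t ^ p.1 * σ' (eQ.symm p.2) := fun p => rfl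
  have hΨmul : ∀ p q : ℤ × Fin m, Ψ (d.mul' p q) = Ψ p * Ψ q := by
    rintro ⟨a, i⟩ ⟨b, j⟩
    rw [hΨap, hΨap, hΨap]
    show t ^ (a + d.ap i b + d.cInt i j) * σ' (eQ.symm (eQ (eQ.symm i * eQ.symm j))) = _
    rw [Equiv.symm_apply_apply, hap, hcInt]
    calc t ^ (a + E (σ (eQ.symm i)) * b + c' (eQ.symm i) (eQ.symm j)) *
          σ' (eQ.symm i * eQ.symm j)
        = t ^ a * t ^ (E (σ (eQ.symm i)) * b) *
            (t ^ c' (eQ.symm i) (eQ.symm j) * σ' (eQ.symm i * eQ.symm j)) := by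
          rw [zpow_add, zpow_add]; group
      _ = t ^ a * t ^ (E (σ (eQ.symm i)) * b) * (σ' (eQ.symm i) * σ' (eQ.symm j)) := by
          rw [hc'']
      _ = t ^ a * (t ^ (E (σ' (eQ.symm i)) * b) * σ' (eQ.symm i)) * σ' (eQ.symm j) := by
          rw [hEσ']; group
      _ = t ^ a * (σ' (eQ.symm i) * t ^ b) * σ' (eQ.symm j) := by rw [← hswap]
      _ = t ^ a * σ' (eQ.symm i) * (t ^ b * σ' (eQ.symm j)) := by group
  have hΨone : Ψ d.one' = 1 := by
    rw [hΨap]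
    show t ^ (0 : ℤ) * σ' (eQ.symm (eQ 1)) = 1
    rw [Equiv.symm_apply_apply, zpow_zero, one_mul, hσ'1]
  have hΨinv : ∀ p : ℤ × Fin m, Ψ (d.inv' p) = (Ψ p)⁻¹ := by
    intro p
    refine eq_inv_of_mul_eq_one_left ?_
    rw [← hΨmul]
    have hmo : d.mul' (d.inv' p) p = d.one' := by
      rcases p with ⟨a, i⟩
      refine Prod.ext ?_ ?_
      · show -(d.ap (d.inv i) a) - d.cInt (d.inv i) i + d.ap (d.inv i) a + d.cInt (d.inv i) i
          = (0 : ℤ)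
        ring
      · show d.mul (d.inv i) i = d.one
        show eQ (eQ.symm (eQ (eQ.symm i)⁻¹) * eQ.symm i) = eQ 1
        rw [Equiv.symm_apply_apply, inv_mul_cancel]
    rw [hmo, hΨone]
  exact ⟨d, pullbackAxioms Ψ d.mul' d.one' d.inv' hΨmul hΨone hΨinv,
    ⟨pullbackEquiv Ψ d.mul' hΨmul⟩⟩


def GpDat (M : ℕ) : Type :=
  {d : FinDat M // d.IsGp} ⊕ {d : ExtDat M // d.IsGp}

instance : Finite (GpDat M) := by unfold GpDat; infer_instance

def GpDat.Carrier : GpDat M → Type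
  | .inl d => Fin d.1.m
  | .inr d => ℤ × Fin d.1.m

def GpDat.grp : ∀ j : GpDat M, Group j.Carrier
  | .inl d => d.1.grp d.2
  | .inr d => d.1.grp d.2

theorem zpowers_le_gen {G : Type*} [Group G] (g : G) (K : Subgroup G)
    (hK : K ≤ Subgroup.zpowers g) : ∃ a : ℤ, K = Subgroup.zpowers (g ^ a) := by
  classical
  set S : AddSubgroup ℤ :=
    { carrier := {k : ℤ | g ^ k ∈ K}
      zero_mem' := by
        simp only [Set.mem_setOf_eq, zpow_zero]
        exact one_mem K
      add_mem' := fun {x y} hx hy => by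
        simp only [Set.mem_setOf_eq, zpow_add] at *
        exact mul_mem hx hy
      neg_mem' := fun {x} hx => by
        simp only [Set.mem_setOf_eq, zpow_neg] at *
        exact inv_mem hx } with hSdef
  obtain ⟨a, ha⟩ := Int.subgroup_cyclic S
  refine ⟨a, le_antisymm ?_ ?_⟩
  · intro x hx
    obtain ⟨k, hk⟩ := Subgroup.mem_zpowers_iff.mp (hK hx)
    have hkS : k ∈ S := by
      simp only [hSdef, AddSubgroup.mem_mk, Set.mem_setOf_eq]
      show g ^ k ∈ K
      rw [hk]; exact hx
    rw [ha, AddSubgroup.mem_closure_singleton] at hkS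
    obtain ⟨j, hj⟩ := hkS
    refine Subgroup.mem_zpowers_iff.mpr ⟨j, ?_⟩
    rw [← zpow_mul, mul_comm, ← smul_eq_mul, hj, hk]
  · have haS : a ∈ S := by
      rw [ha]
      exact AddSubgroup.mem_closure_singleton.mpr ⟨1, one_smul _ _⟩
    exact Subgroup.zpowers_le.mpr haS

theorem comm_mul_central_left {G : Type*} [Group G] (a b z : G)
    (hz : z ∈ Subgroup.center G) : ⁅a * z, b⁆ = ⁅a, b⁆ := by
  have h : z * b * z⁻¹ = b := by
    rw [← Subgroup.mem_center_iff.mp hz b, mul_inv_cancel_right]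
  calc ⁅a * z, b⁆ = a * (z * b * z⁻¹) * a⁻¹ * b⁻¹ := by
        rw [commutatorElement_def]; group
    _ = a * b * a⁻¹ * b⁻¹ := by rw [h]
    _ = ⁅a, b⁆ := (commutatorElement_def a b).symm

theorem comm_mul_central_right {G : Type*} [Group G] (a b z : G)
    (hz : z ∈ Subgroup.center G) : ⁅a, b * z⁆ = ⁅a, b⁆ := by
  have h : z * a⁻¹ * z⁻¹ = a⁻¹ := by
    rw [← Subgroup.mem_center_iff.mp hz a⁻¹, mul_inv_cancel_right]
  calc ⁅a, b * z⁆ = a * b * (z * a⁻¹ * z⁻¹) * b⁻¹ := by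
        rw [commutatorElement_def]; group
    _ = a * b * a⁻¹ * b⁻¹ := by rw [h]
    _ = ⁅a, b⁆ := (commutatorElement_def a b).symm

theorem finite_commutatorSet_of_finite_quotient_center {G : Type*} [Group G]
    [Finite (G ⧸ Subgroup.center G)] : Finite (commutatorSet G) := by
  classical
  set Z := Subgroup.center G with hZ
  set f : (G ⧸ Z) × (G ⧸ Z) → G := fun p => ⁅p.1.out, p.2.out⁆ with hf
  have hsub : commutatorSet G ⊆ Set.range f := by
    rintro w ⟨g₁, g₂, rfl⟩
    refine ⟨(QuotientGroup.mk g₁, QuotientGroup.mk g₂), ?_⟩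
    have h₁ : g₁⁻¹ * (QuotientGroup.mk g₁ : G ⧸ Z).out ∈ Z := by
      rw [← QuotientGroup.eq]
      exact (Quotient.out_eq' _).symm
    have h₂ : g₂⁻¹ * (QuotientGroup.mk g₂ : G ⧸ Z).out ∈ Z := by
      rw [← QuotientGroup.eq]
      exact (Quotient.out_eq' _).symm
    have e₁ : (QuotientGroup.mk g₁ : G ⧸ Z).out = g₁ * (g₁⁻¹ * (QuotientGroup.mk g₁ : G ⧸ Z).out) := by
      rw [← mul_assoc, mul_inv_cancel, one_mul]
    have e₂ : (QuotientGroup.mk g₂ : G ⧸ Z).out = g₂ * (g₂⁻¹ * (QuotientGroup.mk g₂ : G ⧸ Z).out) := by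
      rw [← mul_assoc, mul_inv_cancel, one_mul]
    show f _ = ⁅g₁, g₂⁆
    rw [hf]
    simp only
    rw [e₁, e₂, comm_mul_central_left _ _ _ h₁, comm_mul_central_right _ _ _ h₂]
  exact (Set.Finite.subset (Set.finite_range f) hsub).to_subtype

theorem structure_case {A : Type u} [Group A] [Infinite A] (hVC : IsVirtuallyCyclic A)
    (n : ℕ) (hb : ∀ K : Subgroup A, (K : Set A).Finite → Nat.card K ≤ n) :
    ∃ t : A, ¬IsOfFinOrder t ∧ (Subgroup.zpowers t).Normal ∧
      (Subgroup.zpowers t).index ≠ 0 ∧ (Subgroup.zpowers t).index ≤ (2 * n).factorial := by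
  classical
  obtain ⟨H, hcyc, hfi⟩ := hVC
  haveI := hfi
  -- a finite-index subgroup of an infinite group is infinite
  have hinf : ∀ K : Subgroup A, K.index ≠ 0 → Infinite ↥K := by
    intro K hK
    by_contra hfin
    rw [not_infinite_iff_finite] at hfin
    haveI : K.FiniteIndex := ⟨hK⟩
    haveI : Finite (A ⧸ K) := Subgroup.finite_quotient_of_finiteIndex (H := K)
    haveI : Finite A := Finite.of_equiv _ (Subgroup.groupEquivQuotientProdSubgroup (s := K)).symm
    exact not_finite A
  -- a generator for H
  obtain ⟨g0, hg0⟩ := hcyc.exists_generator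
  have hHz : H = Subgroup.zpowers (g0 : A) := by
    ext x
    constructor
    · intro hx
      obtain ⟨k, hk⟩ := Subgroup.mem_zpowers_iff.mp (hg0 ⟨x, hx⟩)
      exact Subgroup.mem_zpowers_iff.mpr ⟨k, by simpa using congrArg Subtype.val hk⟩
    · intro hx
      obtain ⟨k, hk⟩ := Subgroup.mem_zpowers_iff.mp hx
      rw [← hk]
      exact Subgroup.zpow_mem H g0.2 k
  -- the normal core of H is infinite cyclic with generator t₁
  set K := H.normalCore with hKdef
  haveI : K.FiniteIndex := Subgroup.finiteIndex_normalCore H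
  have hKle : K ≤ Subgroup.zpowers (g0 : A) := hHz ▸ H.normalCore_le
  obtain ⟨a1, hK⟩ := zpowers_le_gen _ _ hKle
  set t₁ : A := (g0 : A) ^ a1 with ht₁def
  have hKinf : Infinite ↥K := hinf K Subgroup.FiniteIndex.index_ne_zero
  have hZK : Subgroup.zpowers t₁ = K := hK.symm
  have ht₁ : ¬IsOfFinOrder t₁ := by
    intro h
    have h2 : (Subgroup.zpowers t₁ : Set A).Finite := finite_zpowers.mpr h
    rw [hZK] at h2
    exact absurd h2 (Set.Infinite.mono (fun x hx => hx) (Set.infinite_coe_iff.mp hKinf))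
  have hKnorm : (Subgroup.zpowers t₁).Normal := hZK ▸ H.normalCore_normal
  have hKidx : (Subgroup.zpowers t₁).index ≠ 0 := by
    rw [hZK]; exact Subgroup.FiniteIndex.index_ne_zero
  have tinj : Function.Injective fun k : ℤ => t₁ ^ k :=
    injective_zpow_iff_not_isOfFinOrder.mpr ht₁
  -- conjugation exponent
  have hconjmem : ∀ x : A, x * t₁ * x⁻¹ ∈ Subgroup.zpowers t₁ := fun x =>
    hKnorm.conj_mem _ (Subgroup.mem_zpowers t₁) x
  choose E hE using fun x : A => Subgroup.mem_zpowers_iff.mp (hconjmem x)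
  have hE1 : E 1 = 1 := by
    apply tinj
    show t₁ ^ E 1 = t₁ ^ (1 : ℤ)
    rw [hE, zpow_one, one_mul, inv_one, mul_one]
  have hEmul : ∀ x y : A, E (x * y) = E x * E y := by
    intro x y
    apply tinj
    show t₁ ^ E (x * y) = t₁ ^ (E x * E y)
    calc t₁ ^ E (x * y) = (x * y) * t₁ * (x * y)⁻¹ := hE _
      _ = x * (y * t₁ * y⁻¹) * x⁻¹ := by group
      _ = x * t₁ ^ E y * x⁻¹ := by rw [hE]
      _ = (x * t₁ * x⁻¹) ^ E y := conj_zpow.symm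
      _ = (t₁ ^ E x) ^ E y := by rw [hE]
      _ = t₁ ^ (E x * E y) := (zpow_mul t₁ (E x) (E y)).symm
  -- the centralizer of t₁, of index at most 2
  set χ : A →* ℤ := { toFun := E, map_one' := hE1, map_mul' := hEmul } with hχdef
  set u : A →* ℤˣ := χ.toHomUnits with hudef
  set C : Subgroup A := u.ker with hCdef
  haveI : Finite ↥u.range := inferInstance
  haveI hCfi : C.FiniteIndex := Subgroup.finiteIndex_ker u
  have hCidx : C.index ≤ 2 := by
    rw [hCdef, Subgroup.index_ker]
    calc Nat.card ↥u.range ≤ Nat.card ℤˣ :=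
          Nat.card_le_card_of_injective _ Subtype.val_injective
      _ = 2 := by simp [Nat.card_eq_fintype_card]
  have hmemC : ∀ x : A, x ∈ C ↔ E x = 1 := by
    intro x
    rw [hCdef, MonoidHom.mem_ker]
    constructor
    · intro h
      have := congrArg Units.val h
      simpa [hudef, hχdef] using this
    · intro h
      ext
      simpa [hudef, hχdef] using h
  have ht₁C : t₁ ∈ C := by
    rw [hmemC]
    apply tinj
    show t₁ ^ E t₁ = t₁ ^ (1 : ℤ)
    rw [hE, zpow_one, mul_inv_cancel_right]
  have hcomm : ∀ x ∈ C, x * t₁ = t₁ * x := by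
    intro x hx
    have h1 : x * t₁ * x⁻¹ = t₁ := by
      rw [← hE x, (hmemC x).mp hx, zpow_one]
    have h2 : x * t₁ * x⁻¹ * x = t₁ * x := by rw [h1]
    rwa [inv_mul_cancel_right] at h2
  -- now work inside C
  set τ : ↥C := ⟨t₁, ht₁C⟩ with hτdef
  have hτcent : τ ∈ Subgroup.center ↥C := by
    rw [Subgroup.mem_center_iff]
    intro g
    ext
    exact hcomm (g : A) g.2
  have hτord : ¬IsOfFinOrder τ := by
    intro h
    apply ht₁
    obtain ⟨k, hk0, hk⟩ := isOfFinOrder_iff_pow_eq_one.mp h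
    refine isOfFinOrder_iff_pow_eq_one.mpr ⟨k, hk0, ?_⟩
    have := congrArg (Subtype.val) hk
    simpa [hτdef] using this
  have tinjτ : Function.Injective fun k : ℤ => τ ^ k := by
    intro a b hab
    apply tinj
    simp only at hab ⊢
    have := congrArg (Subtype.val) hab
    simpa [hτdef] using this
  set Kc : Subgroup ↥C := Subgroup.zpowers τ with hKcdef
  have hKcsub : Kc = (Subgroup.zpowers t₁).subgroupOf C := by
    ext ⟨x, hx⟩
    rw [Subgroup.mem_subgroupOf]
    simp only [hKcdef, Subgroup.mem_zpowers_iff]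
    constructor
    · rintro ⟨k, hk⟩
      exact ⟨k, by simpa using congrArg Subtype.val hk⟩
    · rintro ⟨k, hk⟩
      exact ⟨k, by ext; simp [hτdef, hk]⟩
  have hKcidx : Kc.index ≠ 0 := by
    rw [hKcsub]
    intro hzero
    have hdvd : (Subgroup.zpowers t₁).relIndex C ∣ (Subgroup.zpowers t₁).index :=
      haveI := hKnorm
      Subgroup.relIndex_dvd_index_of_normal _ _
    rw [Subgroup.relIndex] at hdvd
    rw [hzero] at hdvd
    exact hKidx (zero_dvd_iff.mp hdvd)
  haveI : Kc.FiniteIndex := ⟨hKcidx⟩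
  haveI : (Subgroup.center ↥C).FiniteIndex :=
    Subgroup.finiteIndex_of_le (Subgroup.zpowers_le.mpr hτcent)
  haveI : Finite (↥C ⧸ Subgroup.center ↥C) :=
    Subgroup.finite_quotient_of_finiteIndex
  haveI : Finite (commutatorSet ↥C) := finite_commutatorSet_of_finite_quotient_center
  haveI : Finite (_root_.commutator ↥C) := inferInstance
  -- the torsion preimage F
  set π : ↥C →* Abelianization ↥C := Abelianization.of with hπdef
  have hπ1 : ∀ x : ↥C, π x = 1 ↔ x ∈ _root_.commutator ↥C := fun x =>
    QuotientGroup.eq_one_iff x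
  set F : Subgroup ↥C := (CommGroup.torsion (Abelianization ↥C)).comap π with hFdef
  have hFmem : ∀ x : ↥C, x ∈ F ↔ IsOfFinOrder (π x) := by
    intro x
    rw [hFdef, Subgroup.mem_comap, CommGroup.mem_torsion]
  have hcommleF : _root_.commutator ↥C ≤ F := by
    intro x hx
    rw [hFmem, (hπ1 x).mpr hx]
    exact IsOfFinOrder.one
  have hFτ : ∀ a : ℤ, τ ^ a ∈ F → a = 0 := by
    intro a ha
    rw [hFmem] at ha
    obtain ⟨k, hk0, hk⟩ := isOfFinOrder_iff_pow_eq_one.mp ha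
    rw [← map_pow, hπ1] at hk
    have hw : IsOfFinOrder ((τ ^ a) ^ k) := by
      have := isOfFinOrder_of_finite (⟨(τ ^ a) ^ k, hk⟩ : ↥(_root_.commutator ↥C))
      obtain ⟨j, hj0, hj⟩ := isOfFinOrder_iff_pow_eq_one.mp this
      refine isOfFinOrder_iff_pow_eq_one.mpr ⟨j, hj0, ?_⟩
      have := congrArg (Subtype.val) hj
      simpa using this
    obtain ⟨j, hj0, hj⟩ := isOfFinOrder_iff_pow_eq_one.mp hw
    have : τ ^ (a * k * j) = τ ^ (0 : ℤ) := by
      rw [zpow_zero, zpow_mul, zpow_mul]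
      rw [← hj]
      norm_cast
    have h0 := tinjτ this
    have hk0' : (k : ℤ) ≠ 0 := Int.natCast_ne_zero.mpr (Nat.pos_iff_ne_zero.mp hk0)
    have hj0' : (j : ℤ) ≠ 0 := Int.natCast_ne_zero.mpr (Nat.pos_iff_ne_zero.mp hj0)
    rcases mul_eq_zero.mp h0 with h | h
    · rcases mul_eq_zero.mp h with h' | h'
      · exact h'
      · exact absurd h' hk0'
    · exact absurd h hj0'
  haveI hFnorm : F.Normal := Subgroup.Normal.comap inferInstance π
  haveI hFfin : Finite ↥F := by
    haveI : Finite (↥C ⧸ Kc) := Subgroup.finite_quotient_of_finiteIndex (H := Kc)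
    refine Finite.of_injective (fun f : ↥F => (QuotientGroup.mk (f : ↥C) : ↥C ⧸ Kc)) ?_
    intro f₁ f₂ hf
    have hmem : ((f₁ : ↥C))⁻¹ * (f₂ : ↥C) ∈ Kc := QuotientGroup.eq.mp hf
    obtain ⟨b, hb⟩ := Subgroup.mem_zpowers_iff.mp hmem
    have hbF : τ ^ b ∈ F := by
      rw [hb]
      exact mul_mem (inv_mem f₁.2) f₂.2
    have hb0 := hFτ b hbF
    rw [hb0, zpow_zero] at hb
    have := inv_mul_eq_one.mp hb.symm
    exact Subtype.ext this
  have hFcard : Nat.card ↥F ≤ n := by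
    have hiso := Subgroup.equivMapOfInjective F C.subtype (Subgroup.subtype_injective C)
    haveI : Finite ↥(F.map C.subtype) := Finite.of_equiv _ hiso.toEquiv
    have hsetfin : ((F.map C.subtype : Subgroup A) : Set A).Finite := by
      rw [← Set.finite_coe_iff]
      exact inferInstance
    have := hb (F.map C.subtype) hsetfin
    rwa [← Nat.card_congr hiso.toEquiv] at this
  -- the quotient D is torsion-free abelian with cyclic subgroup of finite index
  letI instD : CommGroup (↥C ⧸ F) :=
    { (inferInstance : Group (↥C ⧸ F)) with
      mul_comm := by
        intro a b
        obtain ⟨x, rfl⟩ := QuotientGroup.mk_surjective a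
        obtain ⟨y, rfl⟩ := QuotientGroup.mk_surjective b
        show QuotientGroup.mk (x * y) = QuotientGroup.mk (y * x)
        rw [QuotientGroup.eq]
        refine hcommleF ?_
        have : (x * y)⁻¹ * (y * x) = ⁅y⁻¹, x⁻¹⁆ := by
          rw [commutatorElement_def]
          group
        rw [this]
        exact Subgroup.commutator_mem_commutator (Subgroup.mem_top _) (Subgroup.mem_top _) }
  set mkD : ↥C →* ↥C ⧸ F := QuotientGroup.mk' F with hmkDdef
  have hDtf : ∀ d : ↥C ⧸ F, IsOfFinOrder d → d = 1 := by
    intro d hd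
    obtain ⟨x, rfl⟩ := QuotientGroup.mk_surjective d
    obtain ⟨k, hk0, hk⟩ := isOfFinOrder_iff_pow_eq_one.mp hd
    have hxk : mkD (x ^ k) = 1 := by rw [map_pow]; exact hk
    have hxF : x ^ k ∈ F := (QuotientGroup.eq_one_iff _).mp hxk
    rw [hFmem, map_pow] at hxF
    have hx : IsOfFinOrder (π x) := IsOfFinOrder.of_pow hxF (Nat.pos_iff_ne_zero.mp hk0)
    rw [QuotientGroup.eq_one_iff, hFmem]
    exact hx
  set τb : ↥C ⧸ F := mkD τ with hτbdef
  have hτbord : ¬IsOfFinOrder τb := by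
    intro h
    obtain ⟨k, hk0, hk⟩ := isOfFinOrder_iff_pow_eq_one.mp h
    have hxk : mkD (τ ^ k) = 1 := by rw [map_pow]; exact hk
    have hτF : τ ^ (k : ℤ) ∈ F := by
      rw [zpow_natCast]
      exact (QuotientGroup.eq_one_iff _).mp hxk
    have := hFτ _ hτF
    simp only [Int.natCast_eq_zero] at this
    omega
  set Kbar : Subgroup (↥C ⧸ F) := Subgroup.zpowers τb with hKbardef
  haveI : Finite ((↥C ⧸ F) ⧸ Kbar) := by
    haveI : Finite (↥C ⧸ Kc) := Subgroup.finite_quotient_of_finiteIndex (H := Kc)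
    refine Finite.of_surjective
      (fun q : ↥C ⧸ Kc => (QuotientGroup.mk (mkD q.out) : (↥C ⧸ F) ⧸ Kbar)) ?_
    intro z
    obtain ⟨d, rfl⟩ := QuotientGroup.mk_surjective z
    obtain ⟨x, rfl⟩ := QuotientGroup.mk_surjective d
    refine ⟨QuotientGroup.mk x, ?_⟩
    have hout : ((QuotientGroup.mk x : ↥C ⧸ Kc).out)⁻¹ * x ∈ Kc := by
      rw [← QuotientGroup.eq]
      exact Quotient.out_eq' _
    obtain ⟨b, hb⟩ := Subgroup.mem_zpowers_iff.mp hout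
    rw [QuotientGroup.eq]
    show (mkD ((QuotientGroup.mk x : ↥C ⧸ Kc).out))⁻¹ * mkD x ∈ Kbar
    rw [← map_inv, ← map_mul, ← hb, map_zpow]
    exact Subgroup.zpow_mem _ (Subgroup.mem_zpowers τb) b
  haveI : Kbar.FiniteIndex := Subgroup.finiteIndex_of_finite_quotient (H := Kbar)
  set e := Kbar.index with hedef
  have he0 : e ≠ 0 := Subgroup.FiniteIndex.index_ne_zero
  set ψ : (↥C ⧸ F) →* (↥C ⧸ F) := powMonoidHom e with hψdef
  have hψinj : Function.Injective ψ := by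
    refine (injective_iff_map_eq_one ψ).mpr ?_
    intro d hd
    refine hDtf d (isOfFinOrder_iff_pow_eq_one.mpr ⟨e, Nat.pos_of_ne_zero he0, hd⟩)
  have hRle : ψ.range ≤ Kbar := by
    rintro _ ⟨d, rfl⟩
    exact Subgroup.pow_index_mem Kbar d
  obtain ⟨b, hRz⟩ := zpowers_le_gen τb ψ.range hRle
  set ρ : ↥C ⧸ F := τb ^ b with hρdef
  have hρR : ρ ∈ ψ.range := by rw [hRz]; exact Subgroup.mem_zpowers ρ
  set φiso : (↥C ⧸ F) ≃* ↥ψ.range := MonoidHom.ofInjective hψinj with hφdef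
  obtain ⟨sb, hsb⟩ : ∃ sb : ↥C ⧸ F, φiso sb = ⟨ρ, hρR⟩ :=
    ⟨φiso.symm _, φiso.apply_symm_apply _⟩
  have hgen : ∀ d : ↥C ⧸ F, ∃ k : ℤ, sb ^ k = d := by
    intro d
    have hmem : (↑(φiso d) : ↥C ⧸ F) ∈ Subgroup.zpowers ρ := by
      rw [← hRz]
      exact (φiso d).2
    obtain ⟨k, hk⟩ := Subgroup.mem_zpowers_iff.mp hmem
    refine ⟨k, φiso.injective ?_⟩
    rw [map_zpow, hsb]
    exact Subtype.ext (by simpa [SubgroupClass.coe_zpow] using hk)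
  obtain ⟨s, hs⟩ := QuotientGroup.mk_surjective sb
  have hmkDs : mkD s = sb := hs
  -- index bound for zpowers s in C
  have hsurF : Function.Surjective
      (fun f : ↥F => (QuotientGroup.mk (f : ↥C) : ↥C ⧸ Subgroup.zpowers s)) := by
    intro q
    obtain ⟨x, rfl⟩ := QuotientGroup.mk_surjective q
    obtain ⟨k, hk⟩ := hgen (mkD x)
    have h1 : mkD (x * s ^ (-k)) = 1 := by
      rw [map_mul, map_zpow, hmkDs, zpow_neg, ← hk, mul_inv_cancel]
    refine ⟨⟨x * s ^ (-k), (QuotientGroup.eq_one_iff _).mp h1⟩, ?_⟩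
    show QuotientGroup.mk (x * s ^ (-k)) = QuotientGroup.mk x
    rw [QuotientGroup.eq]
    have h2 : (x * s ^ (-k))⁻¹ * x = s ^ k := by group
    rw [h2]
    exact Subgroup.zpow_mem _ (Subgroup.mem_zpowers s) k
  haveI hQsfin : Finite (↥C ⧸ Subgroup.zpowers s) := Finite.of_surjective _ hsurF
  have hidxsle : (Subgroup.zpowers s).index ≤ n := by
    have h1 : (Subgroup.zpowers s).index = Nat.card (↥C ⧸ Subgroup.zpowers s) := rfl
    rw [h1]
    exact le_trans (Nat.card_le_card_of_surjective _ hsurF) hFcard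
  have hidxs0 : (Subgroup.zpowers s).index ≠ 0 := by
    have h1 : (Subgroup.zpowers s).index = Nat.card (↥C ⧸ Subgroup.zpowers s) := rfl
    rw [h1]
    rw [Nat.card_ne_zero]
    exact ⟨⟨QuotientGroup.mk 1⟩, hQsfin⟩
  have hsord : ¬IsOfFinOrder s := by
    intro h
    have hsbord : IsOfFinOrder sb := by
      obtain ⟨k, hk0, hk⟩ := isOfFinOrder_iff_pow_eq_one.mp h
      refine isOfFinOrder_iff_pow_eq_one.mpr ⟨k, hk0, ?_⟩
      rw [← hmkDs, ← map_pow, hk, map_one]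
    have hDfin : Finite (↥C ⧸ F) := by
      rw [← Set.finite_univ_iff]
      refine Set.Finite.subset (finite_zpowers.mpr hsbord) ?_
      intro d _
      obtain ⟨k, hk⟩ := hgen d
      exact Subgroup.mem_zpowers_iff.mpr ⟨k, hk⟩
    exact absurd (isOfFinOrder_of_finite τb) hτbord
  -- lift to A
  set sA : A := (s : A) with hsAdef
  have hmap : Subgroup.zpowers sA = (Subgroup.zpowers s).map C.subtype :=
    (MonoidHom.map_zpowers C.subtype s).symm
  have hidxA : (Subgroup.zpowers sA).index = (Subgroup.zpowers s).index * C.index := by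
    rw [hmap, Subgroup.index_map, Subgroup.ker_subtype, sup_bot_eq, Subgroup.range_subtype]
  have hidxAle : (Subgroup.zpowers sA).index ≤ 2 * n := by
    rw [hidxA]
    calc (Subgroup.zpowers s).index * C.index ≤ n * 2 :=
          Nat.mul_le_mul hidxsle hCidx
      _ = 2 * n := by ring
  have hidxA0 : (Subgroup.zpowers sA).index ≠ 0 := by
    rw [hidxA]
    exact Nat.mul_ne_zero hidxs0 hCfi.index_ne_zero
  have hsAord : ¬IsOfFinOrder sA := by
    intro h
    apply hsord
    obtain ⟨k, hk0, hk⟩ := isOfFinOrder_iff_pow_eq_one.mp h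
    refine isOfFinOrder_iff_pow_eq_one.mpr ⟨k, hk0, ?_⟩
    ext
    simpa [hsAdef] using hk
  -- pass to the normal core
  haveI : (Subgroup.zpowers sA).FiniteIndex := ⟨hidxA0⟩
  set W := (Subgroup.zpowers sA).normalCore with hWdef
  haveI hWfi : W.FiniteIndex := Subgroup.finiteIndex_normalCore _
  have hWidx : W.index ≤ (2 * n).factorial := by
    haveI : Finite (A ⧸ Subgroup.zpowers sA) :=
      Subgroup.finite_quotient_of_finiteIndex
    haveI := Fintype.ofFinite (A ⧸ Subgroup.zpowers sA)
    have h1 : W.index = Nat.card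
        (MulAction.toPermHom A (A ⧸ Subgroup.zpowers sA)).range := by
      rw [hWdef, Subgroup.normalCore_eq_ker, Subgroup.index_ker]
    have h2 : Nat.card (MulAction.toPermHom A (A ⧸ Subgroup.zpowers sA)).range ≤
        Nat.card (Equiv.Perm (A ⧸ Subgroup.zpowers sA)) :=
      Nat.card_le_card_of_injective _ Subtype.val_injective
    have h3 : Nat.card (Equiv.Perm (A ⧸ Subgroup.zpowers sA)) =
        (Nat.card (A ⧸ Subgroup.zpowers sA)).factorial := by
      rw [Nat.card_eq_fintype_card, Fintype.card_perm, Nat.card_eq_fintype_card]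
    have h4 : Nat.card (A ⧸ Subgroup.zpowers sA) = (Subgroup.zpowers sA).index := rfl
    rw [h1]
    refine le_trans h2 ?_
    rw [h3, h4]
    exact Nat.factorial_le hidxAle
  have hWle : W ≤ Subgroup.zpowers sA := Subgroup.normalCore_le _
  obtain ⟨a2, hWz⟩ := zpowers_le_gen sA W hWle
  have hWinf : Infinite ↥W := hinf W hWfi.index_ne_zero
  refine ⟨sA ^ a2, ?_, ?_, ?_, ?_⟩
  · intro h
    have h2 : (Subgroup.zpowers (sA ^ a2) : Set A).Finite := finite_zpowers.mpr h
    rw [← hWz] at h2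
    exact absurd h2 (Set.Infinite.mono (fun x hx => hx) (Set.infinite_coe_iff.mp hWinf))
  · rw [← hWz]
    exact Subgroup.normalCore_normal _
  · rw [← hWz]
    exact hWfi.index_ne_zero
  · rw [← hWz]
    exact hWidx


end VCC

open VCC in
/-- For every `n`, there are only finitely many isomorphism classes of virtually
cyclic groups all of whose finite subgroups have order at most `n`. -/
theorem finitely_many_virtually_cyclic_groups (n : ℕ) :
    ∃ (k : ℕ) (T : Fin k → Type) (_ : ∀ i, Group (T i)),
      ∀ (A : Type u) (_ : Group A), IsVirtuallyCyclic A →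
        (∀ K : Subgroup A, (K : Set A).Finite → Nat.card K ≤ n) →
        ∃ i, Nonempty (A ≃* T i) := by
  classical
  set M := (2 * n).factorial with hMdef
  haveI : Fintype (GpDat M) := Fintype.ofFinite _
  let e : GpDat M ≃ Fin (Fintype.card (GpDat M)) := Fintype.equivFin _
  refine ⟨Fintype.card (GpDat M), fun i => (e.symm i).Carrier, fun i => (e.symm i).grp,
    fun A _ hVC hb => ?_⟩
  have hn1 : 1 ≤ n := by
    have h := hb ⊥ (by simp)
    simpa using h
  have hnM : n ≤ M := le_trans (by omega : n ≤ 2 * n) (2 * n).self_le_factorial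
  by_cases hfin : Finite A
  · have hcard : Nat.card A ≤ M := by
      have h := hb ⊤ Set.finite_univ
      rw [show Nat.card (⊤ : Subgroup A) = Nat.card A from Nat.card_congr Subgroup.topEquiv.toEquiv] at h
      omega
    obtain ⟨d, h, ⟨iso⟩⟩ := finite_case (A := A) hcard
    refine ⟨e (Sum.inl ⟨d, h⟩), ?_⟩
    beta_reduce
    erw [e.symm_apply_apply]
    exact ⟨iso⟩
  · haveI : Infinite A := not_finite_iff_infinite.mp hfin
    obtain ⟨t, ht, hnorm, h0, hM'⟩ := structure_case hVC n hb
    obtain ⟨d, h, ⟨iso⟩⟩ := ext_case t ht hnorm h0 hM'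
    refine ⟨e (Sum.inr ⟨d, h⟩), ?_⟩
    beta_reduce
    erw [e.symm_apply_apply]
    exact ⟨iso⟩
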